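/- Let K be a field and u ∈ Kˣ; set v = u². Fix an integer n ≥ 3. Let M_n be the free K-module with basis {u⃗_d}_{d ∈ ℤ}, and for i ∈ ℤ/nℤ define F_i(u⃗_d) = u·u⃗_{d+1} if d + i ≡ 0 (mod n) and 0 otherwise, and E_i(u⃗_d) = u⁻¹·u⃗_{d−1} if d + i ≡ 1 (mod n) and 0 otherwise. Then for all i, j ∈ ℤ/nℤ: (i) if i ≠ j and i ≠ j ± 1 (in ℤ/nℤ) then E_i ∘ E_j = E_j ∘ E_i and F_i ∘ F_j = F_j ∘ F_i; (ii) if j = i + 1 or j = i − 1 (in ℤ/nℤ) then the quantum Serre relations hold: E_i² ∘ E_j − (v + v⁻¹)·E_i ∘ E_j ∘ E_i + E_j ∘ E_i² = 0 and F_i² ∘ F_j − (v + v⁻¹)·F_i ∘ F_j ∘ F_i + F_j ∘ F_i² = 0 (indeed each of the three composites in each relation is the zero operator). -/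
import Mathlib


/-- The operator `F_i` on the free module with basis `{u⃗_d}_{d∈ℤ}`:
`F_i(u⃗_d) = u·u⃗_{d+1}` if `d + i ≡ 0 (mod n)`, and `0` otherwise. -/
noncomputable def FopZ {K : Type*} [Field K] (u : Kˣ) (n : ℕ) (i : ZMod n) :
    (ℤ →₀ K) →ₗ[K] (ℤ →₀ K) :=
  Finsupp.lsum K fun d =>
    if (d : ZMod n) + i = 0 then (u : K) • Finsupp.lsingle (d + 1) else 0

/-- The operator `E_i`: `E_i(u⃗_d) = u⁻¹·u⃗_{d−1}` if `d + i ≡ 1 (mod n)`, and `0` otherwise. -/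
noncomputable def EopZ {K : Type*} [Field K] (u : Kˣ) (n : ℕ) (i : ZMod n) :
    (ℤ →₀ K) →ₗ[K] (ℤ →₀ K) :=
  Finsupp.lsum K fun d =>
    if (d : ZMod n) + i = 1 then ((u⁻¹ : Kˣ) : K) • Finsupp.lsingle (d - 1) else 0

/-- The operator `K_i^s` (for `s = ±1`):
`K_i^s(u⃗_d) = v^{s·(𝟙[d+i≡0] − 𝟙[d+i≡1])}·u⃗_d`, where `v = u²`. -/
noncomputable def KopZ {K : Type*} [Field K] (u : Kˣ) (n : ℕ) (i : ZMod n) (s : ℤ) :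
    (ℤ →₀ K) →ₗ[K] (ℤ →₀ K) :=
  Finsupp.lsum K fun d =>
    ((((u ^ 2) ^ (s * ((if (d : ZMod n) + i = 0 then 1 else 0) -
        (if (d : ZMod n) + i = 1 then 1 else 0)))) : Kˣ) : K) • Finsupp.lsingle d

section Aux
variable {K : Type*} [Field K] (u : Kˣ) (n : ℕ)

lemma Fop_single (i : ZMod n) (d : ℤ) (c : K) :
    FopZ u n i (Finsupp.single d c) =
    if (d : ZMod n) + i = 0 then Finsupp.single (d + 1) ((u : K) * c) else 0 := by
  rw [FopZ, Finsupp.lsum_single]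
  split <;> simp only [LinearMap.smul_apply, Finsupp.lsingle_apply, Finsupp.smul_single,
    smul_eq_mul, LinearMap.zero_apply]

lemma Eop_single (i : ZMod n) (d : ℤ) (c : K) :
    EopZ u n i (Finsupp.single d c) =
    if (d : ZMod n) + i = 1 then Finsupp.single (d - 1) (((u⁻¹ : Kˣ) : K) * c) else 0 := by
  rw [EopZ, Finsupp.lsum_single]
  split <;> simp only [LinearMap.smul_apply, Finsupp.lsingle_apply, Finsupp.smul_single,
    smul_eq_mul, LinearMap.zero_apply]

lemma EE_zero (i : ZMod n) (h1 : (1 : ZMod n) ≠ 0) : EopZ u n i ∘ₗ EopZ u n i = 0 := by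
  apply Finsupp.lhom_ext; intro d c
  rw [LinearMap.comp_apply, Eop_single]
  split_ifs with hA
  · rw [Eop_single]
    split_ifs with hB
    · exfalso; push_cast at hB; exact h1 (by linear_combination hA - hB)
    · simp
  · simp

lemma FF_zero (i : ZMod n) (h1 : (1 : ZMod n) ≠ 0) : FopZ u n i ∘ₗ FopZ u n i = 0 := by
  apply Finsupp.lhom_ext; intro d c
  rw [LinearMap.comp_apply, Fop_single]
  split_ifs with hA
  · rw [Fop_single]
    split_ifs with hB
    · exfalso; push_cast at hB; exact h1 (by linear_combination hB - hA)
    · simp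
  · simp

lemma EJE_zero (i j : ZMod n) (h2 : (2 : ZMod n) ≠ 0) :
    EopZ u n i ∘ₗ EopZ u n j ∘ₗ EopZ u n i = 0 := by
  apply Finsupp.lhom_ext; intro d c
  rw [LinearMap.comp_apply, LinearMap.comp_apply, Eop_single]
  split_ifs with hA
  · rw [Eop_single]
    split_ifs with hB
    · rw [Eop_single]
      split_ifs with hC
      · exfalso; push_cast at hC; exact h2 (by linear_combination hA - hC)
      · simp
    · simp
  · simp

lemma FJF_zero (i j : ZMod n) (h2 : (2 : ZMod n) ≠ 0) :
    FopZ u n i ∘ₗ FopZ u n j ∘ₗ FopZ u n i = 0 := by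
  apply Finsupp.lhom_ext; intro d c
  rw [LinearMap.comp_apply, LinearMap.comp_apply, Fop_single]
  split_ifs with hA
  · rw [Fop_single]
    split_ifs with hB
    · rw [Fop_single]
      split_ifs with hC
      · exfalso; push_cast at hC; exact h2 (by linear_combination hC - hA)
      · simp
    · simp
  · simp

end Aux

section Aux2
variable {K : Type*} [Field K] (u : Kˣ) (n : ℕ)

lemma EE_ne_zero (i j : ZMod n) (h : i ≠ j + 1) : EopZ u n i ∘ₗ EopZ u n j = 0 := by
  apply Finsupp.lhom_ext; intro d c
  rw [LinearMap.comp_apply, Eop_single]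
  split_ifs with hA
  · rw [Eop_single]
    split_ifs with hB
    · exfalso; push_cast at hB; exact h (by linear_combination hB - hA)
    · simp
  · simp

lemma FF_ne_zero (i j : ZMod n) (h : i ≠ j - 1) : FopZ u n i ∘ₗ FopZ u n j = 0 := by
  apply Finsupp.lhom_ext; intro d c
  rw [LinearMap.comp_apply, Fop_single]
  split_ifs with hA
  · rw [Fop_single]
    split_ifs with hB
    · exfalso; push_cast at hB; exact h (by linear_combination hB - hA)
    · simp
  · simp

end Aux2

/-- on the fundamental representation `𝕍_n` (`n ≥ 3`, `v = u²`):
(i) if `i ≠ j`, `i ≠ j ± 1` in `ℤ/nℤ`, then `E_i`, `E_j` commute and `F_i`, `F_j` commute;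
(ii) if `j = i ± 1`, the quantum Serre relations
`E_i²E_j − (v+v⁻¹)E_iE_jE_i + E_jE_i² = 0` and `F_i²F_j − (v+v⁻¹)F_iF_jF_i + F_jF_i² = 0`
hold (indeed each of the three composites in each relation vanishes). -/
theorem fundamental_rep_serre {K : Type*} [Field K] (u : Kˣ) (n : ℕ) (hn : 3 ≤ n) :
    (∀ i j : ZMod n, i ≠ j → i ≠ j + 1 → i ≠ j - 1 →
      (EopZ u n i ∘ₗ EopZ u n j = EopZ u n j ∘ₗ EopZ u n i ∧
       FopZ u n i ∘ₗ FopZ u n j = FopZ u n j ∘ₗ FopZ u n i)) ∧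
    (∀ i j : ZMod n, (j = i + 1 ∨ j = i - 1) →
      (EopZ u n i ∘ₗ EopZ u n i ∘ₗ EopZ u n j -
          (((u : K) ^ 2 + ((u : K) ^ 2)⁻¹) •
            (EopZ u n i ∘ₗ EopZ u n j ∘ₗ EopZ u n i)) +
          EopZ u n j ∘ₗ EopZ u n i ∘ₗ EopZ u n i = 0 ∧
       FopZ u n i ∘ₗ FopZ u n i ∘ₗ FopZ u n j -
          (((u : K) ^ 2 + ((u : K) ^ 2)⁻¹) •
            (FopZ u n i ∘ₗ FopZ u n j ∘ₗ FopZ u n i)) +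
          FopZ u n j ∘ₗ FopZ u n i ∘ₗ FopZ u n i = 0 ∧
       EopZ u n i ∘ₗ EopZ u n i ∘ₗ EopZ u n j = 0 ∧
       EopZ u n i ∘ₗ EopZ u n j ∘ₗ EopZ u n i = 0 ∧
       EopZ u n j ∘ₗ EopZ u n i ∘ₗ EopZ u n i = 0 ∧
       FopZ u n i ∘ₗ FopZ u n i ∘ₗ FopZ u n j = 0 ∧
       FopZ u n i ∘ₗ FopZ u n j ∘ₗ FopZ u n i = 0 ∧
       FopZ u n j ∘ₗ FopZ u n i ∘ₗ FopZ u n i = 0)) := by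
  haveI : NeZero n := ⟨by omega⟩
  have h1 : (1 : ZMod n) ≠ 0 := by
    intro h
    have : n ∣ 1 := by
      have := (ZMod.natCast_eq_zero_iff 1 n).mp (by exact_mod_cast h)
      exact this
    have := Nat.le_of_dvd one_pos this
    omega
  have h2 : (2 : ZMod n) ≠ 0 := by
    intro h
    have : n ∣ 2 := by
      have := (ZMod.natCast_eq_zero_iff 2 n).mp (by exact_mod_cast h)
      exact this
    have := Nat.le_of_dvd two_pos this
    omega
  refine ⟨fun i j hij hij1 hij2 => ?_, fun i j hj => ?_⟩
  · constructor
    · rw [EE_ne_zero u n i j hij1, EE_ne_zero u n j i ?_]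
      intro h; exact hij2 (by rw [h]; ring)
    · rw [FF_ne_zero u n i j hij2, FF_ne_zero u n j i ?_]
      intro h; exact hij1 (by rw [h]; ring)
  · have eA : EopZ u n i ∘ₗ EopZ u n i ∘ₗ EopZ u n j = 0 := by
      rw [← LinearMap.comp_assoc, EE_zero u n i h1, LinearMap.zero_comp]
    have eB := EJE_zero u n i j h2
    have eC : EopZ u n j ∘ₗ EopZ u n i ∘ₗ EopZ u n i = 0 := by
      rw [EE_zero u n i h1, LinearMap.comp_zero]
    have fA : FopZ u n i ∘ₗ FopZ u n i ∘ₗ FopZ u n j = 0 := by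
      rw [← LinearMap.comp_assoc, FF_zero u n i h1, LinearMap.zero_comp]
    have fB := FJF_zero u n i j h2
    have fC : FopZ u n j ∘ₗ FopZ u n i ∘ₗ FopZ u n i = 0 := by
      rw [FF_zero u n i h1, LinearMap.comp_zero]
    refine ⟨?_, ?_, eA, eB, eC, fA, fB, fC⟩
    · rw [eA, eB, eC, smul_zero]; abel
    · rw [fA, fB, fC, smul_zero]; abel
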